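/- Under the assumptions that each fᵢ is differentiable, convex, Lᵢ-smooth, the interpolation regime holds, and additionally f = (1/n)∑ᵢ fᵢ is μ-strongly convex, the averaged Moreau envelope M^γ = (1/n)∑ᵢ M_{fᵢ}^γ satisfies M^γ(x) − M^γ(x⋆) ≥ (μ/(1+γL_max)) · (1/2)‖x − x⋆‖² for any x ∈ ℝ^d and any minimizer x⋆ of M^γ. -/

import Mathlib

open Filter Topology

section AuxConvex

variable {E : Type*} [NormedAddCommGroup E] [InnerProductSpace ℝ E] [CompleteSpace E]

lemma aux_line_hasDerivAt {f : E → ℝ} {G : E} (x v : E) (t : ℝ)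
    (h : HasGradientAt f G (x + t • v)) :
    HasDerivAt (fun s : ℝ => f (x + s • v)) (inner ℝ G v : ℝ) t := by
  have hc : HasDerivAt (fun s : ℝ => x + s • v) v t := by
    simpa using ((hasDerivAt_id t).smul_const v).const_add x
  have h2 := h.hasFDerivAt.comp_hasDerivAt t hc
  exact (by simpa [InnerProductSpace.toDual_apply_apply] using h2 :
    HasDerivAt (f ∘ fun s : ℝ => x + s • v) (inner ℝ G v) t)

lemma aux_convex_lower {f : E → ℝ} (hf : ConvexOn ℝ Set.univ f) {G y : E}
    (hG : HasGradientAt f G y) (w : E) : f y + (inner ℝ G (w - y) : ℝ) ≤ f w := by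
  set v := w - y with hv
  have hψ : HasDerivAt (fun s : ℝ => f (y + s • v)) (inner ℝ G v : ℝ) 0 :=
    aux_line_hasDerivAt y v 0 (by simpa using hG)
  have hslope := hasDerivAt_iff_tendsto_slope.mp hψ
  have h2 : Tendsto (slope (fun s : ℝ => f (y + s • v)) 0) (𝓝[>] 0) (𝓝 (inner ℝ G v : ℝ)) :=
    hslope.mono_left (nhdsWithin_mono _ fun t ht => ne_of_gt ht)
  have hev : ∀ᶠ t in 𝓝[>] (0:ℝ), slope (fun s : ℝ => f (y + s • v)) 0 t ≤ f w - f y := by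
    filter_upwards [Ioc_mem_nhdsGT_of_mem (by norm_num : (0:ℝ) ∈ Set.Ico 0 1)] with t ht
    have hcv := hf.2 (Set.mem_univ y) (Set.mem_univ w)
      (by linarith [ht.2] : (0:ℝ) ≤ 1 - t) (le_of_lt ht.1) (by ring)
    have heq : (1-t) • y + t • w = y + t • v := by
      rw [hv]; module
    rw [heq] at hcv
    have h0 : f (y + (0:ℝ) • v) = f y := by norm_num
    rw [slope_def_field]
    simp only [h0]
    rw [div_le_iff₀ (by linarith [ht.1] : (0:ℝ) < t - 0)]
    simp only [smul_eq_mul] at hcv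
    nlinarith [ht.1, ht.2]
  linarith [le_of_tendsto h2 hev]

lemma aux_descent {f : E → ℝ} {g : E → E} {Lc : ℝ} (hLc : 0 ≤ Lc)
    (hg : ∀ z, HasGradientAt f (g z) z)
    (hlip : ∀ z w, ‖g z - g w‖ ≤ Lc * ‖z - w‖) (x y : E) :
    f y ≤ f x + (inner ℝ (g x) (y - x) : ℝ) + Lc / 2 * ‖y - x‖ ^ 2 := by
  set v := y - x with hv
  set ψ : ℝ → ℝ := fun s => f (x + s • v) with hψ
  set φ : ℝ → ℝ := fun s => (inner ℝ (g (x + s • v)) v : ℝ) with hφ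
  have hψd : ∀ t ∈ Set.uIcc (0:ℝ) 1, HasDerivAt ψ (φ t) t :=
    fun t _ => aux_line_hasDerivAt x v t (hg _)
  have hgc : Continuous g := by
    have hl : LipschitzWith (Real.toNNReal Lc) g := by
      apply LipschitzWith.of_dist_le_mul
      intro a b
      rw [dist_eq_norm, dist_eq_norm, Real.coe_toNNReal Lc hLc]
      exact hlip a b
    exact hl.continuous
  have hφc : Continuous φ := by
    apply Continuous.inner
    · exact hgc.comp (by continuity)
    · exact continuous_const
  have hint : IntervalIntegrable φ MeasureTheory.volume 0 1 := hφc.intervalIntegrable _ _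
  have heq : ∫ t in (0:ℝ)..1, φ t = ψ 1 - ψ 0 :=
    intervalIntegral.integral_eq_sub_of_hasDerivAt hψd hint
  have hb : ∀ t ∈ Set.Icc (0:ℝ) 1, φ t ≤ φ 0 + Lc * ‖v‖^2 * t := by
    intro t ht
    have h1 : φ t - φ 0 = (inner ℝ (g (x + t • v) - g (x + (0:ℝ) • v)) v : ℝ) := by
      rw [inner_sub_left]
    have h2 : (inner ℝ (g (x + t • v) - g (x + (0:ℝ) • v)) v : ℝ)
        ≤ ‖g (x + t • v) - g (x + (0:ℝ) • v)‖ * ‖v‖ := real_inner_le_norm _ _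
    have h3 : ‖g (x + t • v) - g (x + (0:ℝ) • v)‖ ≤ Lc * (t * ‖v‖) := by
      have h := hlip (x + t • v) (x + (0:ℝ) • v)
      have he : (x + t • v) - (x + (0:ℝ) • v) = t • v := by module
      rw [he, norm_smul] at h
      simpa [abs_of_nonneg ht.1] using h
    nlinarith [norm_nonneg v, norm_nonneg (g (x + t • v) - g (x + (0:ℝ) • v)), ht.1]
  have hmono : ∫ t in (0:ℝ)..1, φ t ≤ ∫ t in (0:ℝ)..1, (φ 0 + Lc * ‖v‖^2 * t) := by
    apply intervalIntegral.integral_mono_on (by norm_num) hint _ hb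
    apply Continuous.intervalIntegrable
    continuity
  have h1 : IntervalIntegrable (fun t : ℝ => Lc * ‖v‖^2 * t) MeasureTheory.volume 0 1 :=
    (by continuity : Continuous fun t : ℝ => Lc * ‖v‖^2 * t).intervalIntegrable 0 1
  have hval : ∫ t in (0:ℝ)..1, (φ 0 + Lc * ‖v‖^2 * t) = φ 0 + Lc * ‖v‖^2 / 2 := by
    rw [intervalIntegral.integral_add intervalIntegrable_const h1,
      intervalIntegral.integral_const, intervalIntegral.integral_const_mul, integral_id]
    simp
    ring
  have hψ1 : ψ 1 = f y := by simp [hψ, hv]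
  have hψ0 : ψ 0 = f x := by simp [hψ]
  have hφ0 : φ 0 = (inner ℝ (g x) (y - x) : ℝ) := by simp [hφ, hv]
  rw [heq, hval, hψ1, hψ0, hφ0] at hmono
  nlinarith [sq_nonneg (‖v‖), hv]

end AuxConvex

/-- The Moreau envelope of a real-valued function `f` with parameter `γ`. -/
noncomputable def moreau {d : ℕ} (γ : ℝ) (f : EuclideanSpace ℝ (Fin d) → ℝ)
    (x : EuclideanSpace ℝ (Fin d)) : ℝ :=
  ⨅ z, (f z + (1 / (2 * γ)) * ‖z - x‖ ^ 2)

set_option maxHeartbeats 2000000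

/-- Suppose each `fᵢ` is differentiable, convex, `Lᵢ`-smooth (`L_max = max_i Lᵢ`), the
interpolation regime holds, and `f = (1/n)∑ᵢ fᵢ` is `μ`-strongly convex. Then the averaged
Moreau envelope `M^γ = (1/n)∑ᵢ M_{fᵢ}^γ` satisfies
`M^γ(x) − M^γ(x⋆) ≥ (μ/(1+γL_max)) · (1/2)‖x − x⋆‖²` for any `x` and any minimizer `x⋆`
of `M^γ`. -/
theorem stmt12 {d n : ℕ} (hn : 0 < n) (γ μ : ℝ) (hγ : 0 < γ) (hμ : 0 < μ)
    (f : Fin n → EuclideanSpace ℝ (Fin d) → ℝ)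
    (g : Fin n → EuclideanSpace ℝ (Fin d) → EuclideanSpace ℝ (Fin d))
    (L : Fin n → ℝ) (Lmax : ℝ) (hL : ∀ i, 0 < L i)
    (hLmax : ∀ i, L i ≤ Lmax) (hLmax' : ∃ i, L i = Lmax)
    (hconv : ∀ i, ConvexOn ℝ Set.univ (f i))
    (hgrad : ∀ i x, HasGradientAt (f i) (g i x) x)
    (hlip : ∀ i x y, ‖g i x - g i y‖ ≤ L i * ‖x - y‖)
    (hstrong : ∀ x y : EuclideanSpace ℝ (Fin d),
      (1 / (n : ℝ)) * ∑ i, f i x - (1 / (n : ℝ)) * ∑ i, f i y -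
        (inner ℝ ((1 / (n : ℝ)) • ∑ i, g i y) (x - y) : ℝ) ≥ (μ / 2) * ‖x - y‖ ^ 2)
    (hint : ∃ xs : EuclideanSpace ℝ (Fin d), ∀ i, g i xs = 0) :
    ∀ (x xstar : EuclideanSpace ℝ (Fin d)),
      (∀ y, (1 / (n : ℝ)) * ∑ i, moreau γ (f i) xstar ≤
            (1 / (n : ℝ)) * ∑ i, moreau γ (f i) y) →
      (1 / (n : ℝ)) * ∑ i, moreau γ (f i) x - (1 / (n : ℝ)) * ∑ i, moreau γ (f i) xstar ≥
        (μ / (1 + γ * Lmax)) * ((1 / 2) * ‖x - xstar‖ ^ 2) := by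
  intro x xstar hstar
  obtain ⟨xs, hxs⟩ := hint
  obtain ⟨i0, hi0⟩ := hLmax'
  have hLmaxpos : 0 < Lmax := hi0 ▸ hL i0
  have h1γL : (0:ℝ) < 1 + γ * Lmax := by positivity
  obtain ⟨c, hc⟩ : ∃ c : ℝ, c = 1 / (1 + γ * Lmax) := ⟨_, rfl⟩
  have hcpos : 0 < c := by rw [hc]; positivity
  have hnpos : (0:ℝ) < (n:ℝ) := by exact_mod_cast hn
  -- each f i is minimized at xs
  have hmin : ∀ i w, f i xs ≤ f i w := by
    intro i w
    have h := aux_convex_lower (hconv i) (hgrad i xs) w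
    rw [hxs i] at h
    simpa using h
  -- descent lemma
  have hdesc : ∀ i z w, f i w ≤ f i z + (inner ℝ (g i z) (w - z) : ℝ) + L i / 2 * ‖w - z‖ ^ 2 :=
    fun i => aux_descent (le_of_lt (hL i)) (hgrad i) (hlip i)
  -- cocoercivity at the minimum
  have hcoco : ∀ i z, ‖g i z‖ ^ 2 ≤ 2 * L i * (f i z - f i xs) := by
    intro i z
    have hLi := hL i
    have hd := hdesc i z (z - (L i)⁻¹ • g i z)
    have he : z - (L i)⁻¹ • g i z - z = -((L i)⁻¹ • g i z) := by module
    rw [he] at hd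
    have h1 : (inner ℝ (g i z) (-((L i)⁻¹ • g i z)) : ℝ) = -((L i)⁻¹ * ‖g i z‖^2) := by
      rw [inner_neg_right, real_inner_smul_right, real_inner_self_eq_norm_sq]
    have h2 : ‖-((L i)⁻¹ • g i z)‖^2 = (L i)⁻¹^2 * ‖g i z‖^2 := by
      rw [norm_neg, norm_smul, Real.norm_eq_abs, abs_of_pos (inv_pos.mpr hLi)]
      ring
    rw [h1, h2] at hd
    have h3 := hmin i (z - (L i)⁻¹ • g i z)
    have hexp : (L i)⁻¹ * ‖g i z‖^2 - L i / 2 * ((L i)⁻¹^2 * ‖g i z‖^2)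
        = 1/(2*L i) * ‖g i z‖^2 := by
      field_simp
      ring
    have key : f i xs ≤ f i z - 1/(2*L i) * ‖g i z‖^2 := by linarith
    have h2L : (0:ℝ) < 2 * L i := by positivity
    have key2 : ‖g i z‖^2 / (2 * L i) ≤ f i z - f i xs := by
      have : ‖g i z‖^2 / (2 * L i) = 1/(2*L i) * ‖g i z‖^2 := by ring
      linarith [this ▸ (le_refl (‖g i z‖^2 / (2 * L i)))]
    have := (div_le_iff₀ h2L).mp key2
    nlinarith [this]
  -- the key per-component inequality
  have hkey : ∀ i x', f i xs + c * (f i x' - f i xs) ≤ moreau γ (f i) x' := by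
    intro i x'
    rw [moreau]
    apply le_ciInf
    intro z
    have hLi := hL i
    have ha : 0 ≤ f i z - f i xs := sub_nonneg.mpr (hmin i z)
    have h1 := hdesc i z x'
    have h2 : (inner ℝ (g i z) (x' - z) : ℝ) ≤ ‖g i z‖ * ‖x' - z‖ := real_inner_le_norm _ _
    have h3 : ‖g i z‖ * ‖x' - z‖ ≤ γ/2 * ‖g i z‖^2 + 1/(2*γ) * ‖x' - z‖^2 := by
      have e : γ/2 * ‖g i z‖^2 + 1/(2*γ) * ‖x' - z‖^2 - ‖g i z‖ * ‖x' - z‖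
          = 1/(2*γ) * (γ * ‖g i z‖ - ‖x' - z‖)^2 := by
        field_simp
        ring
      nlinarith [mul_nonneg (le_of_lt (one_div_pos.mpr (by positivity : (0:ℝ) < 2*γ)))
        (sq_nonneg (γ * ‖g i z‖ - ‖x' - z‖)), e]
    have h4 := hcoco i z
    have h4' := mul_le_mul_of_nonneg_left h4 (by positivity : (0:ℝ) ≤ γ/2)
    rw [show ‖x' - z‖ = ‖z - x'‖ from norm_sub_rev _ _] at h1 h2 h3
    have hexp : (1 + γ * L i) * ((f i z - f i xs) + 1/(2*γ) * ‖z - x'‖^2)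
        = (f i z - f i xs) + γ * (L i * (f i z - f i xs))
          + 1/(2*γ) * ‖z - x'‖^2 + L i/2 * ‖z - x'‖^2 := by
      field_simp
      ring
    have h6 : f i x' - f i xs
        ≤ (1 + γ * L i) * ((f i z - f i xs) + 1/(2*γ) * ‖z - x'‖^2) := by
      rw [hexp]
      linarith [h1, h2, h3, h4']
    have hA : 0 ≤ (f i z - f i xs) + 1/(2*γ) * ‖z - x'‖^2 :=
      add_nonneg ha (by positivity)
    have hfrac : c * (1 + γ * L i) ≤ 1 := by
      rw [hc, div_mul_eq_mul_div, one_mul, div_le_one h1γL]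
      have := mul_le_mul_of_nonneg_left (hLmax i) (le_of_lt hγ)
      linarith
    calc f i xs + c * (f i x' - f i xs)
        ≤ f i xs + c * ((1 + γ * L i) * ((f i z - f i xs) + 1/(2*γ) * ‖z - x'‖^2)) :=
          add_le_add_right (mul_le_mul_of_nonneg_left h6 hcpos.le) _
      _ = f i xs + (c * (1 + γ * L i)) * ((f i z - f i xs) + 1/(2*γ) * ‖z - x'‖^2) := by
          ring
      _ ≤ f i xs + 1 * ((f i z - f i xs) + 1/(2*γ) * ‖z - x'‖^2) :=
          add_le_add_right (mul_le_mul_of_nonneg_right hfrac hA) _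
      _ = f i z + 1/(2*γ) * ‖z - x'‖^2 := by ring
  -- Moreau envelope lower bound and value at xs
  have hmorlb : ∀ i y, f i xs ≤ moreau γ (f i) y := by
    intro i y
    rw [moreau]
    apply le_ciInf
    intro z
    have := hmin i z
    have h2 : 0 ≤ (1 / (2 * γ)) * ‖z - y‖ ^ 2 := by positivity
    linarith
  have hmorxs : ∀ i, moreau γ (f i) xs ≤ f i xs := by
    intro i
    have hbdd2 : BddBelow (Set.range fun z => f i z + (1 / (2 * γ)) * ‖z - xs‖ ^ 2) := by
      refine ⟨f i xs, ?_⟩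
      rintro _ ⟨z, rfl⟩
      have := hmin i z
      have h2 : 0 ≤ (1 / (2 * γ)) * ‖z - xs‖ ^ 2 := by positivity
      linarith
    rw [moreau]
    refine (ciInf_le hbdd2 xs).trans ?_
    simp
  -- summed key inequality
  have hsum1 : ∀ x' : EuclideanSpace ℝ (Fin d),
      (1/(n:ℝ)) * ∑ i, f i xs
        + c * ((1/(n:ℝ)) * ∑ i, f i x' - (1/(n:ℝ)) * ∑ i, f i xs)
      ≤ (1/(n:ℝ)) * ∑ i, moreau γ (f i) x' := by
    intro x'
    have h := Finset.sum_le_sum (fun i (_ : i ∈ Finset.univ) => hkey i x')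
    have hl : ∑ i, (f i xs + c * (f i x' - f i xs))
        = ∑ i, f i xs + c * (∑ i, f i x' - ∑ i, f i xs) := by
      rw [Finset.sum_add_distrib, ← Finset.mul_sum, Finset.sum_sub_distrib]
    rw [hl] at h
    have h' := mul_le_mul_of_nonneg_left h (le_of_lt (one_div_pos.mpr hnpos))
    have e : (1/(n:ℝ)) * ∑ i, f i xs
        + c * ((1/(n:ℝ)) * ∑ i, f i x' - (1/(n:ℝ)) * ∑ i, f i xs)
        = (1/(n:ℝ)) * (∑ i, f i xs + c * (∑ i, f i x' - ∑ i, f i xs)) := by ring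
    rw [e]
    exact h'
  -- strong convexity at xs
  have hsc : ∀ x' : EuclideanSpace ℝ (Fin d),
      (1/(n:ℝ)) * ∑ i, f i x' - (1/(n:ℝ)) * ∑ i, f i xs ≥ μ/2 * ‖x' - xs‖^2 := by
    intro x'
    have h := hstrong x' xs
    have hz : (∑ i, g i xs) = 0 := Finset.sum_eq_zero (fun i _ => hxs i)
    rw [hz, smul_zero, inner_zero_left] at h
    linarith
  -- S xstar = F xs
  have hSxs_le : (1/(n:ℝ)) * ∑ i, moreau γ (f i) xs ≤ (1/(n:ℝ)) * ∑ i, f i xs :=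
    mul_le_mul_of_nonneg_left (Finset.sum_le_sum fun i _ => hmorxs i) (by positivity)
  have hF_le_S : ∀ y, (1/(n:ℝ)) * ∑ i, f i xs ≤ (1/(n:ℝ)) * ∑ i, moreau γ (f i) y :=
    fun y => mul_le_mul_of_nonneg_left (Finset.sum_le_sum fun i _ => hmorlb i y)
      (by positivity)
  have heqS : (1/(n:ℝ)) * ∑ i, moreau γ (f i) xstar = (1/(n:ℝ)) * ∑ i, f i xs :=
    le_antisymm ((hstar xs).trans hSxs_le) (hF_le_S xstar)
  -- xstar = xs
  have hx1 := hsum1 xstar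
  rw [heqS] at hx1
  have hscx := hsc xstar
  have hprod := mul_le_mul_of_nonneg_left hscx.le hcpos.le
  have hr2 : ‖xstar - xs‖^2 ≤ 0 := by
    nlinarith [mul_pos hcpos hμ, sq_nonneg ‖xstar - xs‖]
  have hr0 : xstar = xs := by
    have h0 : ‖xstar - xs‖^2 = 0 := le_antisymm hr2 (sq_nonneg _)
    have h1 : ‖xstar - xs‖ = 0 := by
      exact (pow_eq_zero_iff two_ne_zero).mp h0
    rw [norm_eq_zero, sub_eq_zero] at h1
    exact h1
  rw [hr0] at heqS ⊢
  -- final chain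
  rw [ge_iff_le, heqS]
  have h1 := hsum1 x
  have h2 := hsc x
  have h3 := mul_le_mul_of_nonneg_left h2.le hcpos.le
  have h4 : (μ / (1 + γ * Lmax)) * ((1/2) * ‖x - xs‖^2)
      = c * (μ/2 * ‖x - xs‖^2) := by rw [hc]; ring
  rw [h4]
  linarith [h1, h3]
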